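/- Let G be a topological group acting continuously by isometries on a complete CAT(0) space X. (i) If there exists a geodesic ray c : [0,∞) → X such that for every g ∈ G the function t ↦ d(g·c(t), c(t)) is bounded (i.e. G fixes the point at infinity determined by c), then the G-action on X is evanescent. (ii) Conversely, if X is proper (closed balls are compact) and the G-action is evanescent, then such a geodesic ray exists. -/

import Mathlib

open Topology


/-- A map `σ : ℝ → X` is a geodesic (isometric) on the interval `[a, b]`. -/
def IsGeodesicOn {X : Type*} [MetricSpace X] (σ : ℝ → X) (a b : ℝ) : Prop :=
  ∀ s ∈ Set.Icc a b, ∀ t ∈ Set.Icc a b, dist (σ s) (σ t) = |s - t|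

/-- A geodesic metric space: any two points are joined by a geodesic segment. -/
def IsGeodesicSpace (X : Type*) [MetricSpace X] : Prop :=
  ∀ x y : X, ∃ σ : ℝ → X, IsGeodesicOn σ 0 (dist x y) ∧ σ 0 = x ∧ σ (dist x y) = y

/-- A CAT(0) space: a geodesic space satisfying the CN inequality of Bruhat–Tits
for all (metric) midpoints. -/
def IsCAT0 (X : Type*) [MetricSpace X] : Prop :=
  IsGeodesicSpace X ∧
    ∀ x c c' m : X, dist m c = dist c c' / 2 → dist m c' = dist c c' / 2 →
      2 * dist m x ^ 2 ≤ dist c' x ^ 2 + dist c x ^ 2 - dist c' c ^ 2 / 2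

/-- A subset of a metric space is (geodesically) convex if it contains every geodesic
segment joining any two of its points. -/
def GConvex {X : Type*} [MetricSpace X] (A : Set X) : Prop :=
  ∀ (σ : ℝ → X) (a b : ℝ), a ≤ b → IsGeodesicOn σ a b → σ a ∈ A → σ b ∈ A →
    ∀ t ∈ Set.Icc a b, σ t ∈ A

/-- `ρ` is an action of the group `G` on `X` by isometries. -/
def IsIsometricAction {G X : Type*} [Group G] [MetricSpace X] (ρ : G → X → X) : Prop :=
  (∀ x, ρ 1 x = x) ∧ (∀ g h x, ρ (g * h) x = ρ g (ρ h x)) ∧ ∀ g : G, Isometry (ρ g)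

/-- A subset `T ⊆ X` is `Q`-evanescent: the set of displacements `d(g x, x)`,
`g ∈ Q`, `x ∈ T`, is bounded. -/
def QEvanescent {G X : Type*} [MetricSpace X] (ρ : G → X → X) (Q : Set G) (T : Set X) : Prop :=
  ∃ C : ℝ, ∀ g ∈ Q, ∀ x ∈ T, dist (ρ g x) x ≤ C

/-- The action is evanescent: there is an unbounded set which is `Q`-evanescent
for every compact `Q ⊆ G`. -/
def Evanescent {G X : Type*} [TopologicalSpace G] [MetricSpace X] (ρ : G → X → X) : Prop :=
  ∃ T : Set X, ¬ Bornology.IsBounded T ∧ ∀ Q : Set G, IsCompact Q → QEvanescent ρ Q T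

/-- The action is weakly evanescent: for every compact `Q ⊆ G` there is an unbounded
`Q`-evanescent set. -/
def WeaklyEvanescent {G X : Type*} [TopologicalSpace G] [MetricSpace X] (ρ : G → X → X) : Prop :=
  ∀ Q : Set G, IsCompact Q → ∃ T : Set X, ¬ Bornology.IsBounded T ∧ QEvanescent ρ Q T

/-- Midsegment lemma: if `m` is a midpoint of `p q` and `n` a midpoint of `q r`,
then `dist m n ≤ dist p r / 2`. -/
lemma midsegment {X : Type*} [MetricSpace X] (hX : IsCAT0 X)
    {p q r m n : X} (hmp : dist m p = dist p q / 2) (hmq : dist m q = dist p q / 2)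
    (hnq : dist n q = dist q r / 2) (hnr : dist n r = dist q r / 2) :
    dist m n ≤ dist p r / 2 := by
  have h1 := hX.2 m q r n hnq hnr
  have h2 := hX.2 r p q m hmp hmq
  have e1 : dist n m = dist m n := dist_comm n m
  have e2 : dist r m = dist m r := dist_comm r m
  have e3 : dist q m = dist m q := dist_comm q m
  have e4 : dist q p = dist p q := dist_comm q p
  have e5 : dist r q = dist q r := dist_comm r q
  have e6 : dist q r = dist q r := rfl
  simp only [e1, e2, e3, e4, e5, hmq] at h1 h2
  have hkey : 4 * dist m n ^ 2 ≤ dist p r ^ 2 := by nlinarith [h1, h2]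
  nlinarith [dist_nonneg (x := m) (y := n), dist_nonneg (x := p) (y := r), hkey]

/-- distance between midpoints lemma. -/
lemma double_midpoint {X : Type*} [MetricSpace X] (hX : IsCAT0 X)
    {x y x' y' m m' : X}
    (h1 : dist m x = dist x y / 2) (h2 : dist m y = dist x y / 2)
    (h3 : dist m' x' = dist x' y' / 2) (h4 : dist m' y' = dist x' y' / 2) :
    dist m m' ≤ (dist x x' + dist y y') / 2 := by
  obtain ⟨σ, hσ, hσ0, hσd⟩ := hX.1 y x'
  set d := dist y x' with hd
  have hd0 : 0 ≤ d := dist_nonneg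
  set n := σ (d / 2) with hn
  have hmem : d / 2 ∈ Set.Icc (0:ℝ) d := ⟨by linarith, by linarith⟩
  have hny : dist n y = d / 2 := by
    have := hσ (d/2) hmem 0 ⟨le_refl 0, hd0⟩
    rw [hσ0] at this; rw [this]; rw [abs_of_nonneg (by linarith)]; ring
  have hnx' : dist n x' = d / 2 := by
    have := hσ (d/2) hmem d ⟨hd0, le_refl d⟩
    rw [hσd] at this; rw [this, abs_of_nonpos (by linarith)]; ring
  -- triangle x y x' : m = mid(x,y), n = mid(y,x')
  have hA : dist m n ≤ dist x x' / 2 := by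
    refine midsegment hX (q := y) h1 h2 ?_ ?_
    · rw [hny, hd]
    · rw [hnx', hd]
  -- triangle y x' y' : n = mid(y,x'), m' = mid(x',y')
  have hB : dist n m' ≤ dist y y' / 2 := by
    have := midsegment hX (p := y) (q := x') (r := y') (m := n) (n := m')
      (by rw [hny, hd]) (by rw [hnx', hd]) h3 h4
    exact this
  calc dist m m' ≤ dist m n + dist n m' := dist_triangle m n m'
    _ ≤ dist x x' / 2 + dist y y' / 2 := add_le_add hA hB
    _ = (dist x x' + dist y y') / 2 := by ring

/-- Bisection lemma: a midpoint-max-convex, Lipschitz-ish function on `[0,b]` is bounded by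
the max of its endpoint values. -/
lemma bisect_max {f : ℝ → ℝ} {b : ℝ} (hb : 0 ≤ b)
    (hmid : ∀ s ∈ Set.Icc (0:ℝ) b, ∀ t ∈ Set.Icc (0:ℝ) b, f ((s+t)/2) ≤ max (f s) (f t))
    (hlip : ∀ s ∈ Set.Icc (0:ℝ) b, ∀ t ∈ Set.Icc (0:ℝ) b, f s ≤ f t + 2*|s - t|) :
    ∀ t ∈ Set.Icc (0:ℝ) b, f t ≤ max (f 0) (f b) := by
  intro t ht
  set M := max (f 0) (f b) with hM
  -- bisection sequence
  let P : ℕ → ℝ × ℝ := fun n => Nat.rec (0, b)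
    (fun _ p => if t ≤ (p.1 + p.2)/2 then (p.1, (p.1 + p.2)/2) else ((p.1 + p.2)/2, p.2)) n
  have hP0 : P 0 = (0, b) := rfl
  have hPs : ∀ n, P (n+1) = if t ≤ ((P n).1 + (P n).2)/2 then ((P n).1, ((P n).1 + (P n).2)/2)
      else (((P n).1 + (P n).2)/2, (P n).2) := fun n => rfl
  have inv : ∀ n, (P n).1 ∈ Set.Icc (0:ℝ) b ∧ (P n).2 ∈ Set.Icc (0:ℝ) b ∧
      (P n).1 ≤ t ∧ t ≤ (P n).2 ∧ f (P n).1 ≤ M ∧ f (P n).2 ≤ M ∧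
      (P n).2 - (P n).1 = b / 2^n := by
    intro n
    induction n with
    | zero =>
      exact ⟨⟨le_refl _, hb⟩, ⟨hb, le_refl _⟩, ht.1, ht.2, le_max_left _ _, le_max_right _ _,
        by rw [hP0]; norm_num⟩
    | succ n ih =>
      obtain ⟨h1, h2, h3, h4, h5, h6, h7⟩ := ih
      have hmidmem : ((P n).1 + (P n).2)/2 ∈ Set.Icc (0:ℝ) b :=
        ⟨by have := h1.1; have := h2.1; linarith, by have := h1.2; have := h2.2; linarith⟩
      have hfmid : f (((P n).1 + (P n).2)/2) ≤ M :=
        le_trans (hmid _ h1 _ h2) (max_le h5 h6)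
      have hle : (P n).1 ≤ (P n).2 := le_trans h3 h4
      rw [hPs n]
      have e : b / (2:ℝ)^(n+1) = (b / 2^n) / 2 := by rw [pow_succ]; ring
      by_cases hc : t ≤ ((P n).1 + (P n).2)/2
      · rw [if_pos hc]
        refine ⟨h1, hmidmem, h3, hc, h5, hfmid, ?_⟩
        rw [e]; simp only []; linarith
      · rw [if_neg hc]
        refine ⟨hmidmem, h2, le_of_not_ge hc, h4, hfmid, h6, ?_⟩
        rw [e]; simp only []; linarith
  -- conclude
  by_contra hcon
  push_neg at hcon
  set ε := f t - M with hε
  have hεpos : 0 < ε := by simp [hε]; linarith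
  obtain ⟨n, hn⟩ := pow_unbounded_of_one_lt (2*b/ε) (by norm_num : (1:ℝ) < 2)
  obtain ⟨h1, h2, h3, h4, h5, h6, h7⟩ := inv n
  have hft : f t ≤ f (P n).1 + 2*|t - (P n).1| := hlip t ht (P n).1 h1
  have habs : |t - (P n).1| ≤ b / 2^n := by
    rw [abs_of_nonneg (by linarith)]
    linarith
  have h2n : (0:ℝ) < 2^n := by positivity
  have : ε ≤ 2 * (b / 2^n) := by
    have := hft; have := habs; simp only [hε]; nlinarith
  rw [div_lt_iff₀ hεpos] at hn
  have hinv : (2:ℝ)^n * ((2:ℝ)^n)⁻¹ = 1 := mul_inv_cancel₀ (ne_of_gt h2n)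
  have : ε * 2^n ≤ 2*b := by
    rw [div_eq_mul_inv] at this
    nlinarith [this, h2n, hinv]
  linarith

/-- Displacement of an isometry along a geodesic is bounded by the maximum of its
values at the endpoints. -/
lemma disp_le_max {X : Type*} [MetricSpace X] (hX : IsCAT0 X) {φ : X → X} (hφ : Isometry φ)
    {σ : ℝ → X} {b : ℝ} (hb : 0 ≤ b) (hσ : IsGeodesicOn σ 0 b) :
    ∀ t ∈ Set.Icc (0:ℝ) b, dist (φ (σ t)) (σ t) ≤
      max (dist (φ (σ 0)) (σ 0)) (dist (φ (σ b)) (σ b)) := by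
  refine bisect_max hb ?_ ?_
  · intro s hs t ht
    have hmem : (s + t)/2 ∈ Set.Icc (0:ℝ) b := by
      constructor <;> [linarith [hs.1, ht.1]; linarith [hs.2, ht.2]]
    have dmx : dist (σ ((s+t)/2)) (σ s) = |s - t| / 2 := by
      rw [hσ _ hmem s hs, show (s+t)/2 - s = -((s-t)/2) by ring, abs_neg, abs_div]
      norm_num
    have dmy : dist (σ ((s+t)/2)) (σ t) = |s - t| / 2 := by
      rw [hσ _ hmem t ht, show (s+t)/2 - t = (s-t)/2 by ring, abs_div]
      norm_num
    have dxy : dist (σ s) (σ t) = |s - t| := hσ s hs t ht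
    have h := double_midpoint hX (x := σ s) (y := σ t) (x' := φ (σ s)) (y' := φ (σ t))
      (m := σ ((s+t)/2)) (m' := φ (σ ((s+t)/2)))
      (by rw [dxy]; exact dmx) (by rw [dxy]; exact dmy)
      (by rw [hφ.dist_eq, hφ.dist_eq, dxy]; exact dmx)
      (by rw [hφ.dist_eq, hφ.dist_eq, dxy]; exact dmy)
    rw [dist_comm (σ ((s+t)/2)) (φ (σ ((s+t)/2))), dist_comm (σ s) (φ (σ s)),
      dist_comm (σ t) (φ (σ t))] at h
    refine h.trans ?_
    have h1 : dist (φ (σ s)) (σ s) ≤ max (dist (φ (σ s)) (σ s)) (dist (φ (σ t)) (σ t)) :=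
      le_max_left _ _
    have h2 : dist (φ (σ t)) (σ t) ≤ max (dist (φ (σ s)) (σ s)) (dist (φ (σ t)) (σ t)) :=
      le_max_right _ _
    linarith
  · intro s hs t ht
    have htr : dist (φ (σ s)) (σ s) ≤ dist (φ (σ s)) (φ (σ t)) + dist (φ (σ t)) (σ t)
        + dist (σ t) (σ s) := dist_triangle4 _ _ _ _
    rw [hφ.dist_eq, hσ s hs t ht, hσ t ht s hs] at htr
    have : |t - s| = |s - t| := abs_sub_comm t s
    linarith [htr, this.le, this.ge]

lemma part_one {G X : Type*} [Group G] [TopologicalSpace G] [MetricSpace X]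
    (hX : IsCAT0 X) (ρ : G → X → X) (hact : IsIsometricAction ρ)
    (hcont : Continuous fun p : G × X => ρ p.1 p.2) (c : ℝ → X)
    (hc : ∀ s ∈ Set.Ici (0:ℝ), ∀ t ∈ Set.Ici (0:ℝ), dist (c s) (c t) = |s - t|)
    (hbd : ∀ g : G, ∃ C : ℝ, ∀ t : ℝ, 0 ≤ t → dist (ρ g (c t)) (c t) ≤ C) :
    Evanescent ρ := by
  have hiso : ∀ g : G, Isometry (ρ g) := hact.2.2
  -- displacement along the ray is dominated by displacement at the origin
  have hdec : ∀ g : G, ∀ t : ℝ, 0 ≤ t →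
      dist (ρ g (c t)) (c t) ≤ dist (ρ g (c 0)) (c 0) := by
    intro g t ht
    obtain ⟨C, hC⟩ := hbd g
    set f : ℝ → ℝ := fun s => dist (ρ g (c s)) (c s) with hf
    have hmid : ∀ s : ℝ, 0 ≤ s → 2 * f s - f 0 ≤ f (2*s) := by
      intro s hs
      have h2s : (0:ℝ) ≤ 2*s := by linarith
      have e1 : dist (c s) (c 0) = s := by
        rw [hc s hs 0 Set.self_mem_Ici, sub_zero, abs_of_nonneg hs]
      have e2 : dist (c 0) (c (2*s)) = 2*s := by
        rw [hc 0 Set.self_mem_Ici (2*s) h2s, zero_sub, abs_neg, abs_of_nonneg h2s]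
      have e3 : dist (c s) (c (2*s)) = s := by
        rw [hc s hs (2*s) h2s, show s - 2*s = -s by ring, abs_neg, abs_of_nonneg hs]
      have h := double_midpoint hX (x := c 0) (y := c (2*s)) (m := c s)
        (x' := ρ g (c 0)) (y' := ρ g (c (2*s))) (m' := ρ g (c s))
        (by rw [e1, e2]; ring) (by rw [e3, e2]; ring)
        (by rw [(hiso g).dist_eq, (hiso g).dist_eq, e1, e2]; ring)
        (by rw [(hiso g).dist_eq, (hiso g).dist_eq, e3, e2]; ring)
      have c1 : dist (c s) (ρ g (c s)) = f s := dist_comm _ _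
      have c2 : dist (c 0) (ρ g (c 0)) = f 0 := dist_comm _ _
      have c3 : dist (c (2*s)) (ρ g (c (2*s))) = f (2*s) := dist_comm _ _
      rw [c1, c2, c3] at h
      linarith
    by_contra hlt
    push_neg at hlt
    have key : ∀ n : ℕ, 2^n * (f t - f 0) + f 0 ≤ f (2^n * t) := by
      intro n
      induction n with
      | zero => simp
      | succ n ih =>
        have h2 := hmid (2^n * t) (by positivity)
        have e : (2:ℝ)^(n+1) * t = 2*(2^n * t) := by ring
        rw [e, pow_succ]
        nlinarith [ih, h2]
    obtain ⟨n, hn⟩ := pow_unbounded_of_one_lt ((C - f 0)/(f t - f 0))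
      (by norm_num : (1:ℝ) < 2)
    rw [div_lt_iff₀ (by linarith : (0:ℝ) < f t - f 0)] at hn
    have hfC : f (2^n * t) ≤ C := hC _ (by positivity)
    nlinarith [key n, hfC, hn]
  -- the ray image is unbounded
  refine ⟨c '' Set.Ici 0, ?_, ?_⟩
  · intro hB
    rw [Metric.isBounded_iff] at hB
    obtain ⟨R, hR⟩ := hB
    have h0 : c 0 ∈ c '' Set.Ici 0 := ⟨0, Set.self_mem_Ici, rfl⟩
    have h1 : c (|R|+1) ∈ c '' Set.Ici 0 := ⟨|R|+1, Set.mem_Ici.2 (by positivity), rfl⟩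
    have := hR h0 h1
    rw [hc 0 Set.self_mem_Ici (|R|+1) (Set.mem_Ici.2 (by positivity)), zero_sub, abs_neg,
      abs_of_nonneg (by positivity)] at this
    have := abs_nonneg R
    have := le_abs_self R
    linarith
  · intro Q hQ
    have hcg : Continuous fun g : G => dist (ρ g (c 0)) (c 0) :=
      (hcont.comp (continuous_id.prodMk continuous_const)).dist continuous_const
    obtain ⟨K, hK⟩ := hQ.bddAbove_image hcg.continuousOn
    refine ⟨K, fun g hg x hx => ?_⟩
    obtain ⟨t, ht, rfl⟩ := hx
    exact le_trans (hdec g t ht) (hK ⟨g, hg, rfl⟩)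

lemma part_two {G X : Type*} [Group G] [TopologicalSpace G] [MetricSpace X] [ProperSpace X]
    (hX : IsCAT0 X) (ρ : G → X → X) (hact : IsIsometricAction ρ)
    (hcont : Continuous fun p : G × X => ρ p.1 p.2) (hev : Evanescent ρ) :
    ∃ c : ℝ → X, (∀ s ∈ Set.Ici (0:ℝ), ∀ t ∈ Set.Ici (0:ℝ), dist (c s) (c t) = |s - t|) ∧
      ∀ g : G, ∃ C : ℝ, ∀ t : ℝ, 0 ≤ t → dist (ρ g (c t)) (c t) ≤ C := by
  obtain ⟨T, hTub, hTev⟩ := hev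
  have hTne : T.Nonempty := by
    rcases T.eq_empty_or_nonempty with h | h
    · exact absurd (h ▸ Bornology.isBounded_empty) hTub
    · exact h
  obtain ⟨x0, hx0⟩ := hTne
  -- choose far away points of T
  have hxn : ∀ n : ℕ, ∃ x ∈ T, (n:ℝ) ≤ dist x0 x := by
    intro n
    by_contra h
    push_neg at h
    exact hTub <| (Metric.isBounded_iff_subset_closedBall x0).2
      ⟨n, fun x hx => Metric.mem_closedBall.2 (by rw [dist_comm]; exact (h x hx).le)⟩
  choose x hxT hxd using hxn
  -- geodesics from x0 to x n
  choose σ hσ hσ0 hσb using fun n => hX.1 x0 (x n)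
  set b : ℕ → ℝ := fun n => dist x0 (x n) with hbdef
  have hb0 : ∀ n, 0 ≤ b n := fun n => dist_nonneg
  -- ultrafilter extending atTop
  let u : Ultrafilter ℕ := Ultrafilter.of Filter.atTop
  have hu : (u : Filter ℕ) ≤ Filter.atTop := Ultrafilter.of_le _
  -- clamped parameters and points
  set τ : ℝ → ℕ → ℝ := fun t n => min (max t 0) (b n) with hτdef
  have hτmem : ∀ t n, τ t n ∈ Set.Icc 0 (b n) := fun t n =>
    ⟨le_min (le_max_right t 0) (hb0 n), min_le_right _ _⟩
  set y : ℝ → ℕ → X := fun t n => σ n (τ t n) with hydef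
  have hyball : ∀ t n, y t n ∈ Metric.closedBall x0 (max t 0) := by
    intro t n
    have h := hσ n (τ t n) (hτmem t n) 0 ⟨le_refl 0, hb0 n⟩
    rw [hσ0 n] at h
    rw [Metric.mem_closedBall, hydef]
    simp only []
    rw [h, sub_zero, abs_of_nonneg (hτmem t n).1]
    exact min_le_left _ _
  -- limits along the ultrafilter
  have hlim : ∀ t : ℝ, ∃ z : X, Filter.Tendsto (fun n => y t n) u (𝓝 z) := by
    intro t
    have hcomp : IsCompact (Metric.closedBall x0 (max t 0)) := isCompact_closedBall _ _
    obtain ⟨z, _, hz⟩ := hcomp.ultrafilter_le_nhds (u.map (fun n => y t n))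
      (Filter.le_principal_iff.2 (Filter.mem_map.2 (Filter.univ_mem'
        (fun n => hyball t n))))
    exact ⟨z, hz⟩
  choose c hc using hlim
  -- eventual behaviour of the clamp
  have hτev : ∀ t : ℝ, 0 ≤ t → ∀ᶠ n in (u : Filter ℕ), τ t n = t := by
    intro t ht
    refine Filter.Eventually.filter_mono hu ?_
    obtain ⟨N, hN⟩ := exists_nat_ge t
    filter_upwards [Filter.eventually_ge_atTop N] with n hn
    have : t ≤ b n := le_trans hN (le_trans (Nat.cast_le.2 hn) (hxd n))
    rw [hτdef]
    simp only [max_eq_left ht, min_eq_left this]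
  -- (1) c is a geodesic ray
  refine ⟨c, ?_, ?_⟩
  · intro s hs t ht
    have h1 : Filter.Tendsto (fun n => dist (y s n) (y t n)) u (𝓝 (dist (c s) (c t))) :=
      (hc s).dist (hc t)
    have h2 : ∀ᶠ n in (u : Filter ℕ), dist (y s n) (y t n) = |s - t| := by
      filter_upwards [hτev s hs, hτev t ht] with n es et
      rw [hydef]
      simp only []
      rw [hσ n (τ s n) (hτmem s n) (τ t n) (hτmem t n), es, et]
    exact tendsto_nhds_unique (h1.congr' h2) tendsto_const_nhds
  -- (2) bounded displacement
  · intro g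
    obtain ⟨C, hC⟩ := hTev {g} isCompact_singleton
    set K : ℝ := max (dist (ρ g x0) x0) C with hK
    refine ⟨K, fun t ht => ?_⟩
    have hdisp : ∀ n, ∀ r ∈ Set.Icc (0:ℝ) (b n), dist (ρ g (σ n r)) (σ n r) ≤ K := by
      intro n r hr
      have h := disp_le_max hX (hact.2.2 g) (hb0 n) (hσ n) r hr
      rw [hσ0 n, hσb n] at h
      refine h.trans (max_le ?_ ?_)
      · exact le_max_left _ _
      · exact le_trans (hC g rfl (x n) (hxT n)) (le_max_right _ _)
    have hgc : Continuous (ρ g) := hcont.comp (continuous_const.prodMk continuous_id)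
    have htend : Filter.Tendsto (fun n => dist (ρ g (y t n)) (y t n)) u
        (𝓝 (dist (ρ g (c t)) (c t))) :=
      (((hgc.tendsto (c t)).comp (hc t)).dist (hc t))
    exact le_of_tendsto htend (Filter.Eventually.of_forall fun n =>
      hdisp n (τ t n) (hτmem t n))

/-- Monod, Proposition: (i) if a continuous isometric action of a topological group `G` on a
complete CAT(0) space `X` fixes a point at infinity (i.e. there is a geodesic ray along which
every `g ∈ G` has bounded displacement), then the action is evanescent; (ii) conversely, if `X`
is proper, an evanescent action admits such a geodesic ray. -/
theorem evanescent_iff_fixed_ray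
    {G : Type*} [Group G] [TopologicalSpace G] [IsTopologicalGroup G]
    {X : Type*} [MetricSpace X] [CompleteSpace X] (hX : IsCAT0 X)
    (ρ : G → X → X) (hact : IsIsometricAction ρ)
    (hcont : Continuous fun p : G × X => ρ p.1 p.2) :
    ((∃ c : ℝ → X, (∀ s ∈ Set.Ici (0:ℝ), ∀ t ∈ Set.Ici (0:ℝ), dist (c s) (c t) = |s - t|) ∧
        ∀ g : G, ∃ C : ℝ, ∀ t : ℝ, 0 ≤ t → dist (ρ g (c t)) (c t) ≤ C) →
      Evanescent ρ) ∧
    (ProperSpace X → Evanescent ρ →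
      ∃ c : ℝ → X, (∀ s ∈ Set.Ici (0:ℝ), ∀ t ∈ Set.Ici (0:ℝ), dist (c s) (c t) = |s - t|) ∧
        ∀ g : G, ∃ C : ℝ, ∀ t : ℝ, 0 ≤ t → dist (ρ g (c t)) (c t) ≤ C) := by
  constructor
  · rintro ⟨c, hc, hb⟩
    exact part_one hX ρ hact hcont c hc hb
  · intro hprop hev
    exact @part_two G X _ _ _ hprop hX ρ hact hcont hev
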